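/- Let S be an n×n Seidel matrix, i.e., a symmetric integer matrix with zero diagonal and all off-diagonal entries in {1, -1}. Then det(S) ≡ 1 - n (mod 4). -/

import Mathlib

open Matrix

section aux

variable {n : ℕ}

/-- The "all ones off diagonal" matrix `J - I`. -/
def seidelBase (n : ℕ) : Matrix (Fin n) (Fin n) ℤ :=
  Matrix.of fun i j => if i = j then 0 else 1

lemma seidelBase_det (n : ℕ) : (seidelBase n).det = (-1) ^ n * (1 - (n : ℤ)) := by
  have h : seidelBase n = -(1 + replicateCol Unit (fun _ => (-1 : ℤ)) * replicateRow Unit (fun _ => (1 : ℤ))) := by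
    ext i j
    by_cases h : i = j <;>
      simp [seidelBase, h, Matrix.one_apply, Matrix.mul_apply, Matrix.replicateCol, Matrix.replicateRow]
  rw [h, Matrix.det_neg, Matrix.det_one_add_replicateCol_mul_replicateRow]
  simp [dotProduct, sub_eq_add_neg]

lemma updateRow_comm' {α : Type*} (M : Matrix (Fin n) (Fin n) α) {i j : Fin n} (hij : i ≠ j)
    (u v : Fin n → α) :
    (M.updateRow i u).updateRow j v = (M.updateRow j v).updateRow i u := by
  ext a b
  by_cases haj : a = j
  · subst haj
    rw [updateRow_self, updateRow_ne (Ne.symm hij), updateRow_self]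
  · rw [updateRow_ne haj]
    by_cases hai : a = i
    · subst hai; rw [updateRow_self, updateRow_self]
    · rw [updateRow_ne hai, updateRow_ne hai, updateRow_ne haj]

/-- Switching one symmetric off-diagonal pair of entries changes the determinant by a
multiple of 4. -/
lemma det_update_pair (S : Matrix (Fin n) (Fin n) ℤ) (hsymm : S.IsSymm)
    (i j : Fin n) (hij : i ≠ j) (hSij : S i j = -1) :
    (4 : ℤ) ∣ ((updateRow (updateRow S i (Function.update (S i) j 1)) j
        (Function.update (S j) i 1)).det - S.det) := by
  have hSji : S j i = -1 := by
    have h := congrFun (congrFun hsymm i) j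
    simp only [Matrix.transpose_apply] at h
    rw [h, hSij]
  have hupd : ∀ (k l : Fin n), S k l = -1 →
      Function.update (S k) l 1 = S k + (2 : ℤ) • Pi.single l 1 := by
    intro k l hkl
    funext m
    by_cases hm : m = l
    · subst hm; simp [hkl]
    · simp [Function.update_of_ne hm, Pi.single_eq_of_ne hm]
  set A := updateRow S i (Function.update (S i) j 1) with hA
  have hAj : A j = S j := updateRow_ne (Ne.symm hij)
  have h1 : (updateRow A j (Function.update (S j) i 1)).det
      = A.det + 2 * (updateRow A j (Pi.single i 1)).det := by
    rw [hupd j i hSji, ← hAj, det_updateRow_add, det_updateRow_smul, updateRow_eq_self]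
  have h2 : A.det = S.det + 2 * (updateRow S i (Pi.single j 1)).det := by
    rw [hA, hupd i j hSij, det_updateRow_add, det_updateRow_smul, updateRow_eq_self]
  set B := updateRow S j (Pi.single i 1) with hB
  have hBi : B i = S i := updateRow_ne hij
  have h3 : updateRow A j (Pi.single i 1)
      = updateRow B i (Function.update (S i) j 1) := by
    rw [hA, hB, updateRow_comm' _ hij]
  have h4 : (updateRow A j (Pi.single i 1)).det
      = B.det + 2 * (updateRow B i (Pi.single j 1)).det := by
    rw [h3, hupd i j hSij, ← hBi, det_updateRow_add, det_updateRow_smul, updateRow_eq_self]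
  have hadj1 : (updateRow S i (Pi.single j 1)).det = adjugate S j i :=
    (adjugate_apply S j i).symm
  have hadj2 : B.det = adjugate S i j := (adjugate_apply S i j).symm
  have hadjsymm : adjugate S i j = adjugate S j i := by
    have h : (adjugate S)ᵀ = adjugate S := by
      rw [adjugate_transpose, hsymm]
    calc adjugate S i j = (adjugate S)ᵀ j i := rfl
      _ = adjugate S j i := by rw [h]
  rw [h1, h2, h4, hadj1, hadj2, hadjsymm]
  exact ⟨adjugate S j i + (updateRow B i (Pi.single j 1)).det, by ring⟩

end aux

/-- The determinant of an `n×n` Seidel matrix (symmetric, zero diagonal, off-diagonal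
entries ±1) is congruent to `1 - n` modulo 4. -/
theorem seidel_det_mod_four {n : ℕ} (S : Matrix (Fin n) (Fin n) ℤ)
    (hsymm : S.IsSymm) (hdiag : ∀ i, S i i = 0)
    (hoff : ∀ i j, i ≠ j → S i j = 1 ∨ S i j = -1) :
    S.det % 4 = (1 - (n : ℤ)) % 4 := by
  have base : (seidelBase n).det % 4 = (1 - (n : ℤ)) % 4 := by
    rw [seidelBase_det]
    rcases Nat.even_or_odd n with he | ho
    · rw [he.neg_one_pow, one_mul]
    · rw [ho.neg_one_pow, neg_one_mul]
      obtain ⟨k, hk⟩ := ho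
      omega
  suffices h : ∀ (m : ℕ) (S : Matrix (Fin n) (Fin n) ℤ), S.IsSymm → (∀ i, S i i = 0) →
      (∀ i j, i ≠ j → S i j = 1 ∨ S i j = -1) →
      (Finset.univ.filter fun p : Fin n × Fin n => S p.1 p.2 ≠ seidelBase n p.1 p.2).card = m →
      S.det % 4 = (1 - (n : ℤ)) % 4 by
    exact h _ S hsymm hdiag hoff rfl
  intro m
  induction m using Nat.strong_induction_on with
  | _ m ih =>
    intro S hsymm hdiag hoff hcard
    by_cases hS : S = seidelBase n
    · rw [hS]; exact base
    · have hex : ∃ p : Fin n × Fin n, S p.1 p.2 ≠ seidelBase n p.1 p.2 := by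
        by_contra hc
        push_neg at hc
        exact hS (by ext i j; exact hc (i, j))
      obtain ⟨⟨i, j⟩, hp⟩ := hex
      simp only at hp
      have hij : i ≠ j := by
        rintro rfl
        exact hp (by simp [seidelBase, hdiag])
      have hBij : seidelBase n i j = 1 := by simp [seidelBase, hij]
      have hBji : seidelBase n j i = 1 := by simp [seidelBase, Ne.symm hij]
      have hSij : S i j = -1 := by
        rcases hoff i j hij with h | h
        · rw [h, hBij] at hp; exact absurd rfl hp
        · exact h
      have hSji : S j i = -1 := by
        have h := congrFun (congrFun hsymm i) j
        simp only [Matrix.transpose_apply] at h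
        rw [h, hSij]
      set S' := updateRow (updateRow S i (Function.update (S i) j 1)) j
        (Function.update (S j) i 1) with hS'
      have hS'app : ∀ a b, S' a b =
          if a = j ∧ b = i then 1 else if a = i ∧ b = j then 1 else S a b := by
        intro a b
        rw [hS']
        by_cases haj : a = j
        · rw [updateRow_apply, if_pos haj, Function.update_apply]
          by_cases hbi : b = i
          · rw [if_pos hbi, if_pos ⟨haj, hbi⟩]
          · rw [if_neg hbi, if_neg (fun h => hbi h.2),
              if_neg (fun h : a = i ∧ b = j => hij (h.1.symm.trans haj)), haj]
        · rw [updateRow_ne haj, updateRow_apply, if_neg (fun h : a = j ∧ b = i => haj h.1)]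
          by_cases hai : a = i
          · rw [if_pos hai, Function.update_apply]
            by_cases hbj : b = j
            · rw [if_pos hbj, if_pos ⟨hai, hbj⟩]
            · rw [if_neg hbj, if_neg (fun h => hbj h.2), hai]
          · rw [if_neg hai, if_neg (fun h : a = i ∧ b = j => hai h.1)]
      have hS'symm : S'.IsSymm := by
        ext a b
        rw [Matrix.transpose_apply, hS'app, hS'app]
        have hsba : S b a = S a b := by
          have h := congrFun (congrFun hsymm a) b
          simpa using h
        by_cases h1 : a = j ∧ b = i <;> by_cases h2 : a = i ∧ b = j <;>
          simp only [and_comm] at * <;>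
          simp [h1, h2, hsba, and_comm]
      have hS'diag : ∀ a, S' a a = 0 := by
        intro a
        rw [hS'app]
        have h1 : ¬(a = j ∧ a = i) := fun h => hij (h.2 ▸ h.1 ▸ rfl)
        have h2 : ¬(a = i ∧ a = j) := fun h => hij (h.1 ▸ h.2 ▸ rfl)
        rw [if_neg h1, if_neg h2]
        exact hdiag a
      have hS'off : ∀ a b, a ≠ b → S' a b = 1 ∨ S' a b = -1 := by
        intro a b hab
        rw [hS'app]
        by_cases h1 : a = j ∧ b = i
        · rw [if_pos h1]; exact Or.inl rfl
        · rw [if_neg h1]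
          by_cases h2 : a = i ∧ b = j
          · rw [if_pos h2]; exact Or.inl rfl
          · rw [if_neg h2]; exact hoff a b hab
      set f : Matrix (Fin n) (Fin n) ℤ → Finset (Fin n × Fin n) := fun T =>
        Finset.univ.filter fun p : Fin n × Fin n => T p.1 p.2 ≠ seidelBase n p.1 p.2 with hf
      have hsub : f S' ⊂ f S := by
        constructor
        · intro p hp'
          simp only [hf, Finset.mem_filter, Finset.mem_univ, true_and] at hp' ⊢
          intro hc
          apply hp'
          rw [hS'app]
          by_cases h1 : p.1 = j ∧ p.2 = i
          · rw [if_pos h1]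
            have h12 : p.1 ≠ p.2 := fun h => hij (h1.2 ▸ h1.1 ▸ h).symm
            have : seidelBase n p.1 p.2 = 1 := by simp [seidelBase, h12]
            rw [this]
          · rw [if_neg h1]
            by_cases h2 : p.1 = i ∧ p.2 = j
            · rw [if_pos h2]
              have h12 : p.1 ≠ p.2 := fun h => hij (h2.1 ▸ h2.2 ▸ h)
              have : seidelBase n p.1 p.2 = 1 := by simp [seidelBase, h12]
              rw [this]
            · rw [if_neg h2, hc]
        · intro hsup
          have hmem : (i, j) ∈ f S := by
            simp only [hf, Finset.mem_filter, Finset.mem_univ, true_and]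
            exact hp
          have hmem' := hsup hmem
          simp only [hf, Finset.mem_filter, Finset.mem_univ, true_and] at hmem'
          apply hmem'
          rw [hS'app]
          have h1 : ¬((i, j).1 = j ∧ (i, j).2 = i) := fun h => hij h.1
          rw [if_neg h1, if_pos ⟨rfl, rfl⟩]
          exact hBij.symm
      have hlt : (f S').card < m := hcard ▸ Finset.card_lt_card hsub
      obtain ⟨c, hc⟩ := det_update_pair S hsymm i j hij hSij
      rw [← hS'] at hc
      have hres := ih _ hlt S' hS'symm hS'diag hS'off rfl
      omega
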